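/- arXiv:1410.3584 — 4 statements merged into one kernel-verified Lean document; each statement's English description precedes it below -/
import Mathlib

section
/- For σ > 0, the convolution of the 3D Coulomb kernel U(x) = 1/(4π|x|) with the Gaussian ρ(x) = exp(-|x|²/σ²) equals (σ³√π/(4|x|)) · Erf(|x|/σ) for x ≠ 0, where Erf(r) = (2/√π)∫₀^r e^{-t²} dt. -/
open Real MeasureTheory Set
open scoped RealInnerProductSpace

noncomputable def erf (r : ℝ) : ℝ := (2 / Real.sqrt π) * ∫ t in (0:ℝ)..r, Real.exp (-t^2)

variable {V : Type*} [NormedAddCommGroup V] [InnerProductSpace ℝ V] [FiniteDimensional ℝ V]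
  [MeasurableSpace V] [BorelSpace V]

lemma my_real_gaussian {b : ℝ} (hb : 0 < b) (c : ℝ) (w : V) :
    ∫ v : V, Real.exp (-b * ‖v‖^2 + c * ⟪w, v⟫) =
      (π / b) ^ ((Module.finrank ℝ V : ℝ) / 2) * Real.exp (c^2 * ‖w‖^2 / (4 * b)) := by
  have hb' : (0:ℝ) < (b : ℂ).re := by simpa using hb
  rw [← Complex.ofReal_inj]
  have h1 : (Complex.ofRealLI (∫ v : V, Real.exp (-b * ‖v‖^2 + c * ⟪w, v⟫)) : ℂ)
      = ∫ v : V, Complex.exp (-(b:ℂ) * ‖v‖^2 + (c:ℂ) * ⟪w, v⟫) := by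
    rw [← Complex.ofRealLI.integral_comp_comm]
    congr 1; ext v
    show ((Real.exp _ : ℝ) : ℂ) = _
    rw [Complex.ofReal_exp]
    push_cast
    ring_nf
  have h2 := GaussianFourier.integral_cexp_neg_mul_sq_norm_add (V := V) hb' c w
  show (Complex.ofRealLI _ : ℂ) = _
  rw [h1, h2]
  have hpb : (0:ℝ) ≤ π / b := by positivity
  rw [show ((π:ℂ) / (b:ℂ)) = ((π / b : ℝ) : ℂ) by push_cast; ring]
  rw [show ((Module.finrank ℝ V : ℂ) / 2) = (((Module.finrank ℝ V : ℝ) / 2 : ℝ) : ℂ) by push_cast; ring]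
  rw [← Complex.ofReal_cpow hpb]
  push_cast

  rfl


lemma my_inner_int {b : ℝ} (hb : 0 < b) (x : EuclideanSpace ℝ (Fin 3)) (t : ℝ) :
    ∫ y : EuclideanSpace ℝ (Fin 3), Real.exp (-(t^2) * ‖x - y‖^2) * Real.exp (-b * ‖y‖^2)
      = (π / (t^2 + b)) ^ ((3:ℝ)/2) * Real.exp (-(b * t^2 / (t^2 + b)) * ‖x‖^2) := by
  have htb : 0 < t^2 + b := by positivity
  have key : ∀ y : EuclideanSpace ℝ (Fin 3),
      Real.exp (-(t^2) * ‖x - y‖^2) * Real.exp (-b * ‖y‖^2)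
        = Real.exp (-(t^2) * ‖x‖^2) * Real.exp (-(t^2+b) * ‖y‖^2 + (2*t^2) * ⟪x, y⟫) := by
    intro y
    rw [← Real.exp_add, ← Real.exp_add]
    congr 1
    have : ‖x - y‖^2 = ‖x‖^2 - 2 * ⟪x, y⟫ + ‖y‖^2 := norm_sub_sq_real x y
    rw [this]; ring
  simp_rw [key]
  rw [integral_const_mul, my_real_gaussian htb (2*t^2) x]
  rw [finrank_euclideanSpace_fin]
  rw [← mul_assoc, mul_comm (Real.exp _), mul_assoc, ← Real.exp_add]
  congr 2
  field_simp
  ring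


section oneD
variable {b R : ℝ}

lemma my_deriv_u (hb : 0 < b) (t : ℝ) :
    HasDerivAt (fun s : ℝ => s / Real.sqrt (s^2 + b)) (b / ((t^2+b) * Real.sqrt (t^2+b))) t := by
  have htb : (0:ℝ) < t^2 + b := by positivity
  have h1 : HasDerivAt (fun s : ℝ => s^2 + b) (2*t) t := by
    simpa using (hasDerivAt_pow 2 t).add_const b
  have h2 : HasDerivAt (fun s : ℝ => Real.sqrt (s^2 + b)) (2*t / (2 * Real.sqrt (t^2+b))) t :=
    h1.sqrt htb.ne'
  have h3 := (hasDerivAt_id t).div h2 (Real.sqrt_pos.mpr htb).ne'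
  refine h3.congr_deriv ?_
  symm
  have hs : Real.sqrt (t^2+b) ^ 2 = t^2 + b := Real.sq_sqrt htb.le
  have hsne : Real.sqrt (t^2+b) ≠ 0 := (Real.sqrt_pos.mpr htb).ne'
  rw [id, hs]
  field_simp
  rw [hs]
  ring

lemma my_primitive_deriv (c : ℝ) (w : ℝ) :
    HasDerivAt (fun u : ℝ => ∫ v in (0:ℝ)..u, Real.exp (-(c * v^2))) (Real.exp (-(c * w^2))) w := by
  have hc : Continuous fun v : ℝ => Real.exp (-(c * v^2)) := by continuity
  exact intervalIntegral.integral_hasDerivAt_right (hc.intervalIntegrable _ _)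
    hc.stronglyMeasurable.stronglyMeasurableAtFilter hc.continuousAt

end oneD

lemma my_rpow_three_halves {x : ℝ} (hx : 0 ≤ x) : x ^ ((3:ℝ)/2) = x * Real.sqrt x := by
  rcases hx.eq_or_lt with rfl | hx'
  · simp [Real.zero_rpow (by norm_num : (3:ℝ)/2 ≠ 0)]
  · rw [show (3:ℝ)/2 = 1 + 1/2 by norm_num, Real.rpow_add hx', Real.rpow_one,
      ← Real.sqrt_eq_rpow]

lemma my_u_tendsto (hb : 0 < b) :
    Filter.Tendsto (fun t : ℝ => t / Real.sqrt (t^2 + b)) Filter.atTop (nhds 1) := by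
  have h1 : Filter.Tendsto (fun t : ℝ => t^2 + b) Filter.atTop Filter.atTop :=
    Filter.tendsto_atTop_add_const_right _ b (Filter.tendsto_pow_atTop two_ne_zero)
  have h2 : Filter.Tendsto (fun t : ℝ => 1 - b / (t^2 + b)) Filter.atTop (nhds 1) := by
    have := (h1.inv_tendsto_atTop).const_mul b
    simp only [mul_zero] at this
    have h3 := (tendsto_const_nhds (x := (1:ℝ)) (f := Filter.atTop)).sub this
    simpa [div_eq_mul_inv] using h3
  have h4 := (Real.continuous_sqrt.tendsto 1).comp h2
  rw [Real.sqrt_one] at h4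
  apply h4.congr'
  filter_upwards [Filter.eventually_gt_atTop (0:ℝ)] with t ht
  have htb : (0:ℝ) < t^2 + b := by positivity
  have : 1 - b / (t^2 + b) = t^2 / (t^2 + b) := by field_simp; ring
  rw [Function.comp_apply, this, Real.sqrt_div (sq_nonneg t), Real.sqrt_sq ht.le]

lemma my_oneD (hb : 0 < b) (hR : 0 < R) :
    IntegrableOn (fun t : ℝ => (π / (t^2 + b)) ^ ((3:ℝ)/2) *
        Real.exp (-(b * t^2 / (t^2 + b)) * R^2)) (Ioi 0) ∧
    ∫ t in Ioi (0:ℝ), (π / (t^2 + b)) ^ ((3:ℝ)/2) * Real.exp (-(b * t^2 / (t^2 + b)) * R^2)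
      = (π * Real.sqrt π / (b * Real.sqrt b * R)) *
        ∫ v in (0:ℝ)..(Real.sqrt b * R), Real.exp (-(1 * v^2)) := by
  set C : ℝ := π * Real.sqrt π / (b * Real.sqrt b * R) with hC
  set m : ℝ → ℝ := fun s => Real.sqrt b * R * (s / Real.sqrt (s^2 + b)) with hm
  set P : ℝ → ℝ := fun w => ∫ v in (0:ℝ)..w, Real.exp (-(1 * v^2)) with hP
  set F : ℝ → ℝ := fun s => C * P (m s) with hF
  have hPd : ∀ w : ℝ, HasDerivAt P (Real.exp (-(1 * w^2))) w := my_primitive_deriv 1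
  have hFd : ∀ t : ℝ, HasDerivAt F
      ((π / (t^2 + b)) ^ ((3:ℝ)/2) * Real.exp (-(b * t^2 / (t^2 + b)) * R^2)) t := by
    intro t
    have htb : (0:ℝ) < t^2 + b := by positivity
    have hs : Real.sqrt (t^2+b) ^ 2 = t^2 + b := Real.sq_sqrt htb.le
    have hsne : Real.sqrt (t^2+b) ≠ 0 := (Real.sqrt_pos.mpr htb).ne'
    have hsb : Real.sqrt b ^ 2 = b := Real.sq_sqrt hb.le
    have hsbne : Real.sqrt b ≠ 0 := (Real.sqrt_pos.mpr hb).ne'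
    have hmd : HasDerivAt m (Real.sqrt b * R * (b / ((t^2+b) * Real.sqrt (t^2+b)))) t :=
      (my_deriv_u hb t).const_mul _
    have h := ((hPd (m t)).comp t hmd).const_mul C
    refine h.congr_deriv ?_
    symm
    have hE : Real.exp (-(1 * (m t)^2)) = Real.exp (-(b * t^2/(t^2+b)) * R^2) := by
      congr 1
      rw [hm]
      simp only [mul_pow, div_pow, hsb, hs]
      field_simp
    have hbne : b ≠ 0 := hb.ne'
    have hRne : R ≠ 0 := hR.ne'
    rw [hE, my_rpow_three_halves (le_of_lt (by positivity : (0:ℝ) < π / (t^2+b))),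
      Real.sqrt_div Real.pi_nonneg]
    generalize Real.exp (-(b * t ^ 2 / (t ^ 2 + b)) * R ^ 2) = E
    have h9 : b * Real.sqrt b * R * b⁻¹ * (Real.sqrt b)⁻¹ * R⁻¹ = 1 := by
      field_simp
    field_simp
    linear_combination (-(π * Real.sqrt π * E)) * h9
  have hpos : ∀ t ∈ Ioi (0:ℝ), 0 ≤ (π / (t^2 + b)) ^ ((3:ℝ)/2) *
      Real.exp (-(b * t^2 / (t^2 + b)) * R^2) := by
    intro t _
    positivity
  have hmt : Filter.Tendsto m Filter.atTop (nhds (Real.sqrt b * R)) := by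
    have := (my_u_tendsto hb).const_mul (Real.sqrt b * R)
    simpa using this
  have hFt : Filter.Tendsto F Filter.atTop (nhds (C * P (Real.sqrt b * R))) :=
    (((hPd (Real.sqrt b * R)).continuousAt.tendsto).comp hmt).const_mul C
  have hF0 : F 0 = 0 := by
    simp [hF, hm, hP, intervalIntegral.integral_same]
  constructor
  · exact integrableOn_Ioi_deriv_of_nonneg' (fun t _ => hFd t) hpos hFt
  · rw [integral_Ioi_of_hasDerivAt_of_nonneg' (fun t _ => hFd t) hpos hFt, hF0, sub_zero]


lemma my_kernel {r : ℝ} (hr : 0 < r) :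
    ∫ t in Ioi (0:ℝ), Real.exp (-(t^2) * r^2) = Real.sqrt π / (2 * r) := by
  have h : ∀ t : ℝ, Real.exp (-(t^2) * r^2) = Real.exp (-(r^2) * t^2) := by
    intro t; ring_nf
  simp_rw [h]
  rw [integral_gaussian_Ioi (r^2), Real.sqrt_div Real.pi_nonneg, Real.sqrt_sq hr.le]
  rw [div_div, mul_comm]


theorem coulomb3d_gaussian_convolution (σ : ℝ) (hσ : 0 < σ)
    (x : EuclideanSpace ℝ (Fin 3)) (hx : x ≠ 0) :
    (∫ y : EuclideanSpace ℝ (Fin 3),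
        (1 / (4 * π * ‖x - y‖)) * Real.exp (-‖y‖^2 / σ^2))
      = (σ^3 * Real.sqrt π / (4 * ‖x‖)) * erf (‖x‖ / σ) := by
  set b : ℝ := (σ^2)⁻¹ with hbdef
  have hb : 0 < b := by positivity
  set R : ℝ := ‖x‖ with hRdef
  have hR : 0 < R := norm_pos_iff.mpr hx
  set f := fun (t : ℝ) (y : EuclideanSpace ℝ (Fin 3)) => Real.exp (-(t^2) * ‖x - y‖^2) * Real.exp (-b * ‖y‖^2)
    with hfdef
  -- Step 0: Gaussian integrability on E
  have hgauss : Integrable (fun y : EuclideanSpace ℝ (Fin 3) => Real.exp (-b * ‖y‖^2)) := by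
    have hb' : (0:ℝ) < ((b:ℂ)).re := by simpa using hb
    have h := (GaussianFourier.integrable_cexp_neg_mul_sq_norm_add (V := EuclideanSpace ℝ (Fin 3)) hb' 0 0).norm
    apply h.congr
    filter_upwards with v
    rw [Complex.norm_exp]
    congr 1
    simp
    left
    rw [← Complex.ofReal_pow, Complex.ofReal_re]
  -- Step 1: integrability for each t
  have hslice : ∀ t : ℝ, Integrable (f t) := by
    intro t
    apply hgauss.mono
    · apply Continuous.aestronglyMeasurable
      fun_prop
    · filter_upwards with y
      rw [Real.norm_eq_abs, Real.norm_eq_abs, abs_of_nonneg (by positivity),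
        abs_of_nonneg (by positivity)]
      exact mul_le_of_le_one_left (by positivity)
        (Real.exp_le_one_iff.mpr (by nlinarith [sq_nonneg t, sq_nonneg ‖x - y‖]))
  -- Step 2: integrability on the product
  have hprod : Integrable (Function.uncurry f) ((volume.restrict (Ioi 0)).prod volume) := by
    rw [MeasureTheory.integrable_prod_iff]
    · constructor
      · exact Filter.Eventually.of_forall (fun t => hslice t)
      · have heq : ∀ t : ℝ, (∫ y, ‖f t y‖)
            = (π / (t^2 + b)) ^ ((3:ℝ)/2) * Real.exp (-(b * t^2 / (t^2 + b)) * R^2) := by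
          intro t
          rw [← my_inner_int hb x t]
          congr 1 with y
          rw [Real.norm_eq_abs, abs_of_nonneg (by positivity)]
        apply ((my_oneD hb hR).1).congr
        filter_upwards with t
        exact (heq t).symm
    · apply Continuous.aestronglyMeasurable
      apply Continuous.mul
      · fun_prop
      · fun_prop
  -- Step 3: rewrite integrand using the kernel identity (a.e.)
  have hae : ∀ᵐ y, y ≠ x := by
    rw [MeasureTheory.ae_iff]
    convert measure_singleton x using 2
    ext y
    simp [not_not]
    · exact inferInstance
  have step1 : (∫ y, (1 / (4 * π * ‖x - y‖)) * Real.exp (-‖y‖^2 / σ^2))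
      = (1 / (2 * π * Real.sqrt π)) * ∫ y, ∫ t in Ioi (0:ℝ), f t y := by
    rw [← integral_const_mul]
    apply MeasureTheory.integral_congr_ae
    filter_upwards [hae] with y hy
    have hxy : (0:ℝ) < ‖x - y‖ := by
      rw [norm_pos_iff, sub_ne_zero]
      exact fun h => hy h.symm
    have hker := my_kernel hxy
    have : (∫ t in Ioi (0:ℝ), f t y)
        = (Real.sqrt π / (2 * ‖x - y‖)) * Real.exp (-b * ‖y‖^2) := by
      rw [hfdef]
      simp only
      rw [MeasureTheory.integral_mul_const, hker]
    rw [this]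
    have hexp : Real.exp (-‖y‖^2 / σ^2) = Real.exp (-b * ‖y‖^2) := by
      congr 1
      rw [hbdef]
      ring
    rw [hexp]
    have hπ : (0:ℝ) < π := Real.pi_pos
    have hsπ : (0:ℝ) < Real.sqrt π := Real.sqrt_pos.mpr hπ
    field_simp
    ring_nf
  -- Step 4: swap integrals
  have step2 : (∫ y, ∫ t in Ioi (0:ℝ), f t y)
      = ∫ t in Ioi (0:ℝ), ∫ y, f t y := (MeasureTheory.integral_integral_swap hprod).symm
  -- Step 5: compute the inner integral and then the t-integral
  have step3 : (∫ t in Ioi (0:ℝ), ∫ y, f t y)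
      = (π * Real.sqrt π / (b * Real.sqrt b * R)) *
          ∫ v in (0:ℝ)..(Real.sqrt b * R), Real.exp (-(1 * v^2)) := by
    rw [← (my_oneD hb hR).2]
    apply MeasureTheory.setIntegral_congr_fun measurableSet_Ioi
    intro t _
    exact my_inner_int hb x t
  rw [step1, step2, step3]
  -- Step 6: final algebra
  have hsb : Real.sqrt b = σ⁻¹ := by
    rw [hbdef, Real.sqrt_inv, Real.sqrt_sq hσ.le]
  have hbR : Real.sqrt b * R = R / σ := by rw [hsb]; ring
  rw [hbR, erf]
  simp_rw [one_mul]
  have hint : (∫ v in (0:ℝ)..(R / σ), Real.exp (-(v^2)))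
      = ∫ t in (0:ℝ)..(R / σ), Real.exp (-t^2) := rfl
  rw [hint]
  have hπ : (0:ℝ) < π := Real.pi_pos
  have hsπ : (0:ℝ) < Real.sqrt π := Real.sqrt_pos.mpr hπ
  rw [hsb, hbdef]
  have h2 : Real.sqrt π * Real.sqrt π = π := Real.mul_self_sqrt hπ.le
  field_simp
  ring_nf
end

section
/- For σ > 0 and x ∈ ℝ, the convolution of U(x) = -|x|/2 with the normalized Gaussian G(x) = (1/(√(2π)σ)) e^{-x²/(2σ²)} equals u(x) = -(σ/√(2π)) e^{-x²/(2σ²)} - (x/2)·Erf(x/(√2 σ)). -/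
open Real MeasureTheory Filter Topology

section helpers
variable {σ : ℝ}

lemma gauss_int (hσ : 0 < σ) : Integrable (fun y : ℝ => Real.exp (-y^2/(2*σ^2))) := by
  have := integrable_exp_neg_mul_sq (b := (2*σ^2)⁻¹) (by positivity)
  exact this.congr (Eventually.of_forall fun y => by ring_nf)

lemma gauss_mul_int (hσ : 0 < σ) : Integrable (fun y : ℝ => y * Real.exp (-y^2/(2*σ^2))) := by
  have := integrable_mul_exp_neg_mul_sq (b := (2*σ^2)⁻¹) (by positivity)
  exact this.congr (Eventually.of_forall fun y => by ring_nf)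

lemma gauss_abs_mul_int (hσ : 0 < σ) (x : ℝ) :
    Integrable (fun y : ℝ => |x - y| * Real.exp (-y^2/(2*σ^2))) := by
  have hg : Integrable (fun y : ℝ => |x| * Real.exp (-y^2/(2*σ^2))
      + |y| * Real.exp (-y^2/(2*σ^2))) := by
    refine ((gauss_int hσ).const_mul |x|).add ?_
    refine ((gauss_mul_int hσ).abs).congr (Eventually.of_forall fun y => ?_)
    simp only [abs_mul, abs_of_pos (Real.exp_pos _)]
  refine hg.mono' ?_ (Eventually.of_forall fun y => ?_)
  · apply Continuous.aestronglyMeasurable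
    exact (continuous_const.sub continuous_id).abs.mul (by continuity)
  · have h1 : |x - y| ≤ |x| + |y| := abs_sub x y
    have he : (0:ℝ) < Real.exp (-y^2/(2*σ^2)) := Real.exp_pos _
    rw [Real.norm_eq_abs, abs_mul, abs_abs, abs_of_pos he]
    nlinarith [abs_nonneg (x - y), abs_nonneg x, abs_nonneg y]

lemma gauss_total (hσ : 0 < σ) :
    ∫ y : ℝ, Real.exp (-y^2/(2*σ^2)) = Real.sqrt (2*π) * σ := by
  have h : ∀ y : ℝ, Real.exp (-y^2/(2*σ^2)) = Real.exp (-(2*σ^2)⁻¹ * y^2) := fun y => by ring_nf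
  simp_rw [h, integral_gaussian]
  rw [show π / (2*σ^2)⁻¹ = (2*π) * σ^2 by field_simp, Real.sqrt_mul (by positivity),
    Real.sqrt_sq hσ.le]

lemma gauss_hasDeriv (hσ : 0 < σ) (y : ℝ) :
    HasDerivAt (fun y : ℝ => -σ^2 * Real.exp (-y^2/(2*σ^2)))
      (y * Real.exp (-y^2/(2*σ^2))) y := by
  have h1 : HasDerivAt (fun y : ℝ => -y^2/(2*σ^2)) (-y/σ^2) y := by
    have := ((hasDerivAt_pow 2 y).div_const (2*σ^2)).neg
    rw [show (fun y : ℝ => -y^2/(2*σ^2)) = -fun x => x^2/(2*σ^2) by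
      funext z; simp only [Pi.neg_apply]; ring]
    refine this.congr_deriv ?_
    push_cast; field_simp
  have := (h1.exp).const_mul (-σ^2)
  refine this.congr_deriv ?_
  field_simp

lemma gauss_Iic_mul (hσ : 0 < σ) (x : ℝ) :
    ∫ y in Set.Iic x, y * Real.exp (-y^2/(2*σ^2)) = -σ^2 * Real.exp (-x^2/(2*σ^2)) := by
  have htb : Tendsto (fun y : ℝ => -σ^2 * Real.exp (-y^2/(2*σ^2))) atBot (𝓝 0) := by
    have he : Tendsto (fun y : ℝ => Real.exp (-y^2/(2*σ^2))) atBot (𝓝 0) := by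
      apply Real.tendsto_exp_atBot.comp
      have h1 : Tendsto (fun y : ℝ => y^2) atBot atTop :=
        ((tendsto_pow_atTop (two_ne_zero)).comp (tendsto_neg_atBot_atTop (G := ℝ))).congr
          fun y => by simp
      exact (h1.atTop_mul_const_of_neg (r := -(2*σ^2)⁻¹) (by simp; positivity)).congr
        fun y => by ring
    simpa using he.const_mul (-σ^2)
  have := integral_Iic_of_hasDerivAt_of_tendsto' (a := x) (fun y _ => gauss_hasDeriv hσ y)
    (gauss_mul_int hσ).integrableOn htb
  rw [this]; ring

lemma gauss_Ioi_mul (hσ : 0 < σ) (x : ℝ) :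
    ∫ y in Set.Ioi x, y * Real.exp (-y^2/(2*σ^2)) = σ^2 * Real.exp (-x^2/(2*σ^2)) := by
  have htt : Tendsto (fun y : ℝ => -σ^2 * Real.exp (-y^2/(2*σ^2))) atTop (𝓝 0) := by
    have he : Tendsto (fun y : ℝ => Real.exp (-y^2/(2*σ^2))) atTop (𝓝 0) := by
      apply Real.tendsto_exp_atBot.comp
      have h1 : Tendsto (fun y : ℝ => y^2) atTop atTop := tendsto_pow_atTop two_ne_zero
      exact (h1.atTop_mul_const_of_neg (r := -(2*σ^2)⁻¹) (by simp; positivity)).congr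
        fun y => by ring
    simpa using he.const_mul (-σ^2)
  have := integral_Ioi_of_hasDerivAt_of_tendsto' (a := x) (fun y _ => gauss_hasDeriv hσ y)
    (gauss_mul_int hσ).integrableOn htt
  rw [this]; ring

lemma gauss_Iic (hσ : 0 < σ) (x : ℝ) :
    ∫ y in Set.Iic x, Real.exp (-y^2/(2*σ^2))
      = Real.sqrt (2*π) * σ / 2 + Real.sqrt 2 * σ * (Real.sqrt π / 2)
        * erf (x / (Real.sqrt 2 * σ)) := by
  have hIic0 : ∫ y in Set.Iic (0:ℝ), Real.exp (-y^2/(2*σ^2)) = Real.sqrt (2*π) * σ / 2 := by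
    have hIoi : ∫ y in Set.Ioi (0:ℝ), Real.exp (-y^2/(2*σ^2)) = Real.sqrt (2*π) * σ / 2 := by
      have h : ∀ y : ℝ, Real.exp (-y^2/(2*σ^2)) = Real.exp (-(2*σ^2)⁻¹ * y^2) :=
        fun y => by ring_nf
      simp_rw [h, integral_gaussian_Ioi]
      rw [show π / (2*σ^2)⁻¹ = (2*π) * σ^2 by field_simp,
        Real.sqrt_mul (by positivity), Real.sqrt_sq hσ.le]
    have hall := intervalIntegral.integral_Iic_add_Ioi (μ := volume) (b := (0:ℝ))
      (gauss_int hσ).integrableOn (gauss_int hσ).integrableOn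
    rw [gauss_total hσ, hIoi] at hall
    linarith
  have hsub := intervalIntegral.integral_Iic_sub_Iic (μ := volume) (a := (0:ℝ)) (b := x)
    (gauss_int hσ).integrableOn (gauss_int hσ).integrableOn
  have hchg : ∫ y in (0:ℝ)..x, Real.exp (-y^2/(2*σ^2))
      = Real.sqrt 2 * σ * ∫ t in (0:ℝ)..(x / (Real.sqrt 2 * σ)), Real.exp (-t^2) := by
    have hc : (Real.sqrt 2 * σ) ≠ 0 := by positivity
    have h : ∀ y : ℝ, Real.exp (-y^2/(2*σ^2)) = Real.exp (-(y / (Real.sqrt 2 * σ))^2) := by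
      intro y
      congr 1
      rw [div_pow, mul_pow, Real.sq_sqrt (by norm_num : (0:ℝ) ≤ 2)]
      field_simp
    simp_rw [h]
    rw [intervalIntegral.integral_comp_div (fun t => Real.exp (-t^2)) hc]
    simp [smul_eq_mul]
  rw [hchg, hIic0] at hsub
  have herf : ∫ t in (0:ℝ)..(x / (Real.sqrt 2 * σ)), Real.exp (-t^2)
      = (Real.sqrt π / 2) * erf (x / (Real.sqrt 2 * σ)) := by
    rw [erf]
    have hpi : Real.sqrt π ≠ 0 := by positivity
    field_simp
  rw [herf] at hsub
  linarith
end helpers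

theorem conv_abs_gaussian_1d (σ : ℝ) (hσ : 0 < σ) (x : ℝ) :
    (∫ y : ℝ, (-|x - y| / 2) * ((1 / (Real.sqrt (2 * π) * σ)) * Real.exp (-y^2 / (2 * σ^2))))
      = -(σ / Real.sqrt (2 * π)) * Real.exp (-x^2 / (2 * σ^2))
        - (x / 2) * erf (x / (Real.sqrt 2 * σ)) := by
  have hS : (0:ℝ) < Real.sqrt (2*π) := Real.sqrt_pos.mpr (by positivity)
  set S := Real.sqrt (2*π) with hSdef
  have habs := gauss_abs_mul_int hσ x
  have hI : (∫ y : ℝ, (-|x - y| / 2) * ((1 / (S * σ)) * Real.exp (-y^2 / (2 * σ^2))))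
      = (-(1 / (S * σ)) / 2) * ∫ y : ℝ, |x - y| * Real.exp (-y^2 / (2 * σ^2)) := by
    rw [← integral_const_mul]
    congr 1; funext y; ring
  rw [hI]
  have hsplit : (∫ y : ℝ, |x - y| * Real.exp (-y^2 / (2 * σ^2)))
      = (∫ y in Set.Iic x, |x - y| * Real.exp (-y^2 / (2 * σ^2)))
        + ∫ y in Set.Ioi x, |x - y| * Real.exp (-y^2 / (2 * σ^2)) :=
    (intervalIntegral.integral_Iic_add_Ioi habs.integrableOn habs.integrableOn).symm
  have hIic : (∫ y in Set.Iic x, |x - y| * Real.exp (-y^2 / (2 * σ^2)))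
      = x * (∫ y in Set.Iic x, Real.exp (-y^2 / (2 * σ^2)))
        - ∫ y in Set.Iic x, y * Real.exp (-y^2 / (2 * σ^2)) := by
    rw [← integral_const_mul, ← integral_sub (((gauss_int hσ).const_mul x).integrableOn)
      ((gauss_mul_int hσ).integrableOn)]
    refine setIntegral_congr_fun measurableSet_Iic fun y hy => ?_
    have : |x - y| = x - y := abs_of_nonneg (by simpa using hy)
    rw [this]; ring
  have hIoi : (∫ y in Set.Ioi x, |x - y| * Real.exp (-y^2 / (2 * σ^2)))
      = (∫ y in Set.Ioi x, y * Real.exp (-y^2 / (2 * σ^2)))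
        - x * ∫ y in Set.Ioi x, Real.exp (-y^2 / (2 * σ^2)) := by
    rw [← integral_const_mul, ← integral_sub ((gauss_mul_int hσ).integrableOn)
      (((gauss_int hσ).const_mul x).integrableOn)]
    refine setIntegral_congr_fun measurableSet_Ioi fun y hy => ?_
    have : |x - y| = y - x := by
      rw [abs_sub_comm]; exact abs_of_nonneg (by simp at hy; linarith)
    rw [this]; ring
  have hA2 : (∫ y in Set.Ioi x, Real.exp (-y^2/(2*σ^2)))
      = S * σ - ∫ y in Set.Iic x, Real.exp (-y^2/(2*σ^2)) := by
    have := intervalIntegral.integral_Iic_add_Ioi (μ := volume) (b := x)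
      (gauss_int hσ).integrableOn (gauss_int hσ).integrableOn
    rw [gauss_total hσ] at this
    linarith
  have hA1 := gauss_Iic hσ x
  have hsqp : Real.sqrt 2 * Real.sqrt π = S := (Real.sqrt_mul (by norm_num) π).symm
  rw [hsplit, hIic, hIoi, hA2, hA1, gauss_Iic_mul hσ x, gauss_Ioi_mul hσ x]
  rw [← hsqp]
  have h2 : (0:ℝ) < Real.sqrt 2 := by positivity
  have hp : (0:ℝ) < Real.sqrt π := Real.sqrt_pos.mpr pi_pos
  field_simp
  rw [show Real.sqrt (2*π) = Real.sqrt 2 * Real.sqrt π from Real.sqrt_mul (by norm_num) π]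
  ring
end

section
/- For σ > 0, the radially symmetric function u₁₁(x) defined by u₁₁(x) = -(1/(4π))[E₁(|x|²/(2σ²)) + 2 ln|x|] for x ≠ 0 and u₁₁(0) = (1/(4π))(γ - ln(2σ²)), where E₁(r) = ∫_r^∞ t⁻¹ e^{-t} dt and γ is the Euler–Mascheroni constant, satisfies -Δu₁₁(x) = (1/(2πσ²)) e^{-|x|²/(2σ²)} for all x ≠ 0 in ℝ². -/
open Real MeasureTheory Filter Classical

noncomputable def E1 (r : ℝ) : ℝ := ∫ t in Set.Ioi r, Real.exp (-t) / t

lemma E1_integrableOn {a : ℝ} (ha : 0 < a) :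
    IntegrableOn (fun t => Real.exp (-t) / t) (Set.Ioi a) := by
  have hbound : IntegrableOn (fun t => Real.exp (-1 * t) / a) (Set.Ioi a) :=
    (exp_neg_integrableOn_Ioi a one_pos).div_const a
  apply hbound.mono' ((Real.measurable_exp.comp measurable_neg).div measurable_id).aestronglyMeasurable
  filter_upwards [ae_restrict_mem measurableSet_Ioi] with t ht
  have ht' : a < t := ht
  simp only [Pi.div_apply, Function.comp_apply, id_eq, Function.comp, id, neg_one_mul, Real.norm_eq_abs]
  rw [abs_of_nonneg (div_nonneg (Real.exp_nonneg _) (by linarith))]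
  gcongr

lemma hasDerivAt_E1 {r : ℝ} (hr : 0 < r) :
    HasDerivAt E1 (-(Real.exp (-r) / r)) r := by
  set a := r / 2 with ha_def
  have ha : 0 < a := by positivity
  have har : a < r := by simp only [ha_def]; linarith
  have hint : IntegrableOn (fun t => Real.exp (-t) / t) (Set.Ioi a) := E1_integrableOn ha
  have key : ∀ s, a < s → E1 s = E1 a - ∫ t in a..s, Real.exp (-t) / t := by
    intro s hs
    have hsplit : ∫ t in Set.Ioc a s ∪ Set.Ioi s, Real.exp (-t) / t =
        (∫ t in Set.Ioc a s, Real.exp (-t) / t) + ∫ t in Set.Ioi s, Real.exp (-t) / t := by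
      apply setIntegral_union (Set.Ioc_disjoint_Ioi le_rfl) measurableSet_Ioi
      · exact hint.mono_set Set.Ioc_subset_Ioi_self
      · exact (E1_integrableOn (ha.trans hs)).mono_set (le_refl _)
    rw [Set.Ioc_union_Ioi_eq_Ioi hs.le] at hsplit
    rw [intervalIntegral.integral_of_le hs.le]
    show E1 s = E1 a - ∫ t in Set.Ioc a s, Real.exp (-t) / t
    unfold E1
    rw [hsplit]; ring
  have hderiv : HasDerivAt (fun s => E1 a - ∫ t in a..s, Real.exp (-t) / t)
      (-(Real.exp (-r) / r)) r := by
    have hii : IntervalIntegrable (fun t => Real.exp (-t) / t) volume a r :=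
      (intervalIntegrable_iff_integrableOn_Ioc_of_le har.le).mpr
        (hint.mono_set Set.Ioc_subset_Ioi_self)
    have hcont : ContinuousAt (fun t => Real.exp (-t) / t) r :=
      ((Real.continuous_exp.comp continuous_neg).continuousAt).div continuousAt_id hr.ne'
    have hmeas : StronglyMeasurableAtFilter (fun t => Real.exp (-t) / t) (nhds r) :=
      ((Real.measurable_exp.comp measurable_neg).div measurable_id).stronglyMeasurable.stronglyMeasurableAtFilter
    exact ((intervalIntegral.integral_hasDerivAt_right hii hmeas hcont).const_sub (E1 a))
  apply hderiv.congr_of_eventuallyEq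
  filter_upwards [Ioi_mem_nhds har] with s hs
  exact key s hs

noncomputable def laplacian (f : EuclideanSpace ℝ (Fin 2) → ℝ)
    (x : EuclideanSpace ℝ (Fin 2)) : ℝ :=
  ∑ i : Fin 2, fderiv ℝ (fun y => fderiv ℝ f y (EuclideanSpace.single i 1)) x
    (EuclideanSpace.single i 1)

theorem laplacian_u11 (σ : ℝ) (hσ : 0 < σ) (γ : ℝ)
    (hγ : Tendsto (fun n : ℕ => (∑ k ∈ Finset.range n, (1 : ℝ) / (k + 1)) - Real.log n)
      atTop (nhds γ))
    (u11 : EuclideanSpace ℝ (Fin 2) → ℝ)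
    (hu11 : ∀ x : EuclideanSpace ℝ (Fin 2),
      u11 x = if x = 0 then (1 / (4 * π)) * (γ - Real.log (2 * σ^2))
        else -(1 / (4 * π)) * (E1 (‖x‖^2 / (2 * σ^2)) + 2 * Real.log ‖x‖))
    (x : EuclideanSpace ℝ (Fin 2)) (hx : x ≠ 0) :
    -(laplacian u11 x) = (1 / (2 * π * σ^2)) * Real.exp (-‖x‖^2 / (2 * σ^2)) := by
  have hπ : (0:ℝ) < π := Real.pi_pos
  set c : ℝ := 2 * σ ^ 2 with hc
  have hc0 : 0 < c := by positivity
  have hx0 : 0 < ‖x‖ := norm_pos_iff.mpr hx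
  set s : ℝ := ‖x‖ ^ 2 with hs
  have hs0 : 0 < s := by positivity
  set h : ℝ → ℝ := fun t => -(1 / (4 * π)) * (E1 (t / c) + Real.log t) with hhdef
  set g : ℝ → ℝ := fun t => -(1 / (4 * π)) * ((1 - Real.exp (-(t / c))) / t) with hgdef
  set g' : ℝ → ℝ := fun t =>
    -(1 / (4 * π)) * ((Real.exp (-(t / c)) * (1 / c) * t - (1 - Real.exp (-(t / c)))) / t ^ 2)
    with hg'def
  -- derivative of h
  have hhderiv : ∀ t : ℝ, 0 < t → HasDerivAt h (g t) t := by
    intro t ht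
    have h1 : HasDerivAt (fun u : ℝ => u / c) (1 / c) t := by
      simpa using (hasDerivAt_id t).div_const c
    have h2 : HasDerivAt (fun u : ℝ => E1 (u / c)) (-(Real.exp (-(t / c)) / (t / c)) * (1 / c)) t :=
      (hasDerivAt_E1 (by positivity)).comp t h1
    have h3 : HasDerivAt Real.log (1 / t) t := by
      simpa [one_div] using Real.hasDerivAt_log ht.ne'
    have h4 := ((h2.add h3).const_mul (-(1 / (4 * π))))
    refine h4.congr_deriv ?_
    simp only [hgdef]
    field_simp
    ring
  -- derivative of g
  have hgderiv : ∀ t : ℝ, 0 < t → HasDerivAt g (g' t) t := by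
    intro t ht
    have h1 : HasDerivAt (fun u : ℝ => -(u / c)) (-(1 / c)) t := by
      exact ((hasDerivAt_id t).div_const c).neg
    have h2 : HasDerivAt (fun u : ℝ => 1 - Real.exp (-(u / c)))
        (Real.exp (-(t / c)) * (1 / c)) t := by
      have := (Real.hasDerivAt_exp (-(t / c))).comp t h1
      have h3 := this.const_sub 1
      refine h3.congr_deriv ?_
      ring
    have h4 := (h2.div (hasDerivAt_id t) ht.ne').const_mul (-(1 / (4 * π)))
    refine h4.congr_deriv ?_
    simp only [hg'def, id_eq]
    ring
  -- u11 agrees with h ∘ ‖·‖² away from 0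
  have hU : ∀ y : EuclideanSpace ℝ (Fin 2), y ≠ 0 → u11 y = h (‖y‖ ^ 2) := by
    intro y hy
    rw [hu11 y, if_neg hy]
    simp only [hhdef]
    rw [Real.log_pow]
    push_cast
    ring_nf
  have hopen : IsOpen {y : EuclideanSpace ℝ (Fin 2) | y ≠ 0} := isOpen_compl_singleton
  -- first derivative
  have hfd : ∀ y : EuclideanSpace ℝ (Fin 2), y ≠ 0 →
      fderiv ℝ u11 y = g (‖y‖ ^ 2) • ((2:ℝ) • (innerSL ℝ y)) := by
    intro y hy
    have hy0 : 0 < ‖y‖ := norm_pos_iff.mpr hy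
    have hq : HasFDerivAt (fun z : EuclideanSpace ℝ (Fin 2) => ‖z‖ ^ 2)
        ((2:ℝ) • (innerSL ℝ y)) y := by
      have := (hasStrictFDerivAt_norm_sq y).hasFDerivAt
      refine this.congr_fderiv ?_
      ext v
      simp [two_smul]
    have hH : HasFDerivAt (fun z : EuclideanSpace ℝ (Fin 2) => h (‖z‖ ^ 2))
        (g (‖y‖ ^ 2) • ((2:ℝ) • (innerSL ℝ y))) y :=
      (hhderiv _ (by positivity)).comp_hasFDerivAt y hq
    have heq : u11 =ᶠ[nhds y] fun z => h (‖z‖ ^ 2) := by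
      filter_upwards [hopen.mem_nhds hy] with z hz
      exact hU z hz
    rw [heq.fderiv_eq, hH.fderiv]
  -- second derivative terms
  have key : ∀ i : Fin 2,
      fderiv ℝ (fun y => fderiv ℝ u11 y (EuclideanSpace.single i 1)) x
        (EuclideanSpace.single i 1)
      = 2 * g s + g' s * (2 * x i) * (2 * x i) := by
    intro i
    set e : EuclideanSpace ℝ (Fin 2) := EuclideanSpace.single i 1 with he
    have hinner_xe : (inner ℝ x e : ℝ) = x i := by
      simp [he, EuclideanSpace.inner_single_right]
    have hinner_ee : (inner ℝ e e : ℝ) = 1 := by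
      simp [he, EuclideanSpace.inner_single_right, EuclideanSpace.single_apply]
    have heq : (fun y => fderiv ℝ u11 y e) =ᶠ[nhds x]
        (fun y => g (‖y‖ ^ 2) * (2 * (inner ℝ y e : ℝ))) := by
      filter_upwards [hopen.mem_nhds hx] with y hy
      rw [hfd y hy]
      simp [mul_comm]
    rw [heq.fderiv_eq]
    -- derivative of y ↦ g(‖y‖²)
    have hq : HasFDerivAt (fun z : EuclideanSpace ℝ (Fin 2) => ‖z‖ ^ 2)
        ((2:ℝ) • (innerSL ℝ x)) x := by
      have := (hasStrictFDerivAt_norm_sq x).hasFDerivAt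
      refine this.congr_fderiv ?_
      ext v
      simp [two_smul]
    have hG : HasFDerivAt (fun z : EuclideanSpace ℝ (Fin 2) => g (‖z‖ ^ 2))
        (g' s • ((2:ℝ) • (innerSL ℝ x))) x :=
      (hgderiv _ hs0).comp_hasFDerivAt (h₂ := g) x hq
    -- derivative of the linear part
    have hL : HasFDerivAt (fun z : EuclideanSpace ℝ (Fin 2) => 2 * (inner ℝ z e : ℝ))
        ((2:ℝ) • (innerSL ℝ e)) x := by
      have := ((2:ℝ) • (innerSL ℝ e)).hasFDerivAt (x := x)
      convert this using 1
      ext z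
      simp [real_inner_comm]
    have hmul := hG.mul hL
    rw [HasFDerivAt.fderiv (f := fun y => g (‖y‖ ^ 2) * (2 * (inner ℝ y e : ℝ))) hmul]
    simp only [ContinuousLinearMap.add_apply, ContinuousLinearMap.smul_apply, innerSL_apply_apply,
      smul_eq_mul, hinner_xe, hinner_ee]
    ring
  -- sum them up
  have hsum : laplacian u11 x = 4 * g s + 4 * g' s * s := by
    unfold laplacian
    rw [Finset.sum_congr rfl (fun i _ => key i)]
    have hnorm : ∑ i : Fin 2, (x i) ^ 2 = s := by
      rw [hs, EuclideanSpace.norm_eq, Real.sq_sqrt (by positivity)]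
      exact Finset.sum_congr rfl (fun i _ => by simp [Real.norm_eq_abs, sq_abs])
    rw [Finset.sum_add_distrib]
    simp only [Finset.sum_const, Finset.card_univ, Fintype.card_fin, nsmul_eq_mul]
    rw [show ∀ a b : ℝ, (2:ℕ) * (2 * a) + b = 4 * a + b from fun a b => by push_cast; ring]
    congr 1
    rw [← hnorm, Finset.mul_sum]
    exact Finset.sum_congr rfl (fun i _ => by ring)
  rw [hsum]
  have hexp : Real.exp (-‖x‖ ^ 2 / (2 * σ ^ 2)) = Real.exp (-(s / c)) := by
    rw [hs, hc, neg_div]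
  rw [hexp]
  simp only [hgdef, hg'def]
  field_simp
  ring
end

section
/- The limit as x → 0 (x ∈ ℝ², x ≠ 0) of -(1/(4π))[E₁(|x|²/(2σ²)) + 2 ln|x|] equals (1/(4π))(γ - ln(2σ²)), where γ is the Euler–Mascheroni constant. -/
open Real MeasureTheory Filter

open Set Topology

namespace E1Aux

local notation "γ₀" => Real.eulerMascheroniConstant

lemma hasDerivAt_one_sub_exp_neg (x : ℝ) :
    HasDerivAt (fun t : ℝ => 1 - Real.exp (-t)) (Real.exp (-x)) x := by
  have h : HasDerivAt (fun t : ℝ => Real.exp (-t)) (Real.exp (-x) * (-1)) x :=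
    (Real.hasDerivAt_exp (-x)).comp x ((hasDerivAt_id x).neg)
  simpa using (h.const_sub 1)

lemma hasDerivAt_exp_neg (x : ℝ) :
    HasDerivAt (fun t : ℝ => Real.exp (-t)) (-Real.exp (-x)) x := by
  have h : HasDerivAt (fun t : ℝ => Real.exp (-t)) (Real.exp (-x) * (-1)) x :=
    (Real.hasDerivAt_exp (-x)).comp x ((hasDerivAt_id x).neg)
  simpa using h

lemma int_exp_div_Ioi1 : IntegrableOn (fun t => Real.exp (-t) / t) (Ioi (1:ℝ)) := by
  have h := exp_neg_integrableOn_Ioi (1:ℝ) one_pos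
  refine (h.congr_fun (fun x _ => by rw [neg_one_mul]) measurableSet_Ioi).mono' ?_ ?_
  · exact ((Real.measurable_exp.comp measurable_neg).div measurable_id).aestronglyMeasurable
  · filter_upwards [ae_restrict_mem measurableSet_Ioi] with t ht
    have ht1 : (1:ℝ) < t := ht
    rw [norm_div, Real.norm_eq_abs, Real.norm_eq_abs, abs_of_pos (Real.exp_pos _),
      abs_of_pos (by linarith : (0:ℝ) < t), div_le_iff₀ (by linarith)]
    nlinarith [Real.exp_pos (-t)]

lemma int_log_exp_Ioi1 : IntegrableOn (fun t => Real.log t * Real.exp (-t)) (Ioi (1:ℝ)) := by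
  have h : IntegrableOn (fun x : ℝ => Real.exp (-x) * x ^ ((2:ℝ) - 1)) (Ioi 0) :=
    Real.GammaIntegral_convergent two_pos
  have h' : IntegrableOn (fun x : ℝ => Real.exp (-x) * x) (Ioi (1:ℝ)) := by
    refine ((h.mono (Ioi_subset_Ioi zero_le_one) le_rfl).congr_fun (fun x _ => ?_)
      measurableSet_Ioi)
    norm_num
  refine h'.mono' ?_ ?_
  · exact (Real.measurable_log.mul (Real.measurable_exp.comp measurable_neg)).aestronglyMeasurable
  · filter_upwards [ae_restrict_mem measurableSet_Ioi] with t ht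
    have ht1 : (1:ℝ) < t := ht
    have hl : |Real.log t| ≤ t := by
      rw [abs_of_nonneg (Real.log_nonneg ht1.le)]
      linarith [Real.log_le_sub_one_of_pos (by linarith : (0:ℝ) < t)]
    rw [Real.norm_eq_abs, abs_mul, abs_of_pos (Real.exp_pos _)]
    calc |Real.log t| * Real.exp (-t) ≤ t * Real.exp (-t) := by
          exact mul_le_mul_of_nonneg_right hl (Real.exp_pos _).le
      _ = Real.exp (-t) * t := mul_comm _ _

lemma int_sub_div_Ioc : IntegrableOn (fun t => (1 - Real.exp (-t)) / t) (Ioc (0:ℝ) 1) := by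
  have hc : IntegrableOn (fun _ : ℝ => (1:ℝ)) (Ioc (0:ℝ) 1) := integrableOn_const (by simp)
  refine hc.mono' ?_ ?_
  · exact (((measurable_const.sub (Real.measurable_exp.comp measurable_neg))).div
      measurable_id).aestronglyMeasurable
  · filter_upwards [ae_restrict_mem measurableSet_Ioc] with t ht
    have ht0 : (0:ℝ) < t := ht.1
    have h1 : 1 - Real.exp (-t) ≤ t := by
      have := Real.add_one_le_exp (-t)
      nlinarith [Real.exp_pos (-t)]
    have h2 : 0 ≤ 1 - Real.exp (-t) := by
      have : Real.exp (-t) ≤ 1 := Real.exp_le_one_iff.mpr (by linarith)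
      linarith
    rw [Real.norm_eq_abs, abs_div, abs_of_nonneg h2, abs_of_pos ht0, div_le_one ht0]
    exact h1

lemma neg_log_le (t : ℝ) (ht : 0 < t) : -Real.log t ≤ 2 * t ^ (-(1/2) : ℝ) := by
  have hs : 0 < Real.sqrt t := Real.sqrt_pos.mpr ht
  have h1 : Real.log (Real.sqrt t) = Real.log t / 2 := Real.log_sqrt ht.le
  have h2 : Real.log (Real.sqrt t)⁻¹ ≤ (Real.sqrt t)⁻¹ := by
    have := Real.log_le_sub_one_of_pos (inv_pos.mpr hs)
    linarith
  have h3 : (Real.sqrt t)⁻¹ = t ^ (-(1/2) : ℝ) := by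
    rw [Real.sqrt_eq_rpow, ← Real.rpow_neg ht.le]
  rw [Real.log_inv, h1] at h2
  rw [← h3]
  linarith

lemma int_log_exp_Ioc : IntegrableOn (fun t => Real.log t * Real.exp (-t)) (Ioc (0:ℝ) 1) := by
  have hr : IntegrableOn (fun x : ℝ => x ^ (-(1/2) : ℝ)) (Ioc (0:ℝ) 1) := by
    have := intervalIntegral.intervalIntegrable_rpow' (a := 0) (b := 1) (r := -(1/2)) (by norm_num)
    simpa [intervalIntegrable_iff_integrableOn_Ioc_of_le zero_le_one] using this
  refine (hr.const_mul 2).mono' ?_ ?_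
  · exact (Real.measurable_log.mul (Real.measurable_exp.comp measurable_neg)).aestronglyMeasurable
  · filter_upwards [ae_restrict_mem measurableSet_Ioc] with t ht
    have ht0 : (0:ℝ) < t := ht.1
    have hlog : Real.log t ≤ 0 := Real.log_nonpos ht0.le ht.2
    have hexp : Real.exp (-t) ≤ 1 := Real.exp_le_one_iff.mpr (by linarith)
    rw [Real.norm_eq_abs, abs_mul, abs_of_pos (Real.exp_pos _), abs_of_nonpos hlog]
    calc -Real.log t * Real.exp (-t) ≤ -Real.log t * 1 :=
          mul_le_mul_of_nonneg_left hexp (by linarith)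
      _ = -Real.log t := mul_one _
      _ ≤ 2 * t ^ (-(1/2) : ℝ) := neg_log_le t ht0

/-- Integral over `Ioc r 1` tends to integral over `Ioc 0 1` as `r → 0⁺`. -/
lemma tendsto_integral_Ioc {h : ℝ → ℝ} (hh : IntegrableOn h (Ioc (0:ℝ) 1)) :
    Tendsto (fun r => ∫ t in Ioc r 1, h t) (𝓝[>] (0:ℝ))
      (𝓝 (∫ t in Ioc (0:ℝ) 1, h t)) := by
  have hIcc : IntegrableOn h (Icc (0:ℝ) 1) := by
    rwa [integrableOn_Icc_iff_integrableOn_Ioc]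
  have hc : ContinuousOn (fun x => ∫ t in Ioc (0:ℝ) x, h t) (Icc 0 1) :=
    intervalIntegral.continuousOn_primitive hIcc
  have hP : Tendsto (fun x => ∫ t in Ioc (0:ℝ) x, h t) (𝓝[>] (0:ℝ)) (𝓝 0) := by
    have h0 : (∫ t in Ioc (0:ℝ) 0, h t) = 0 := by simp
    have := (hc 0 ⟨le_rfl, zero_le_one⟩)
    rw [ContinuousWithinAt, h0] at this
    refine this.mono_left (nhdsWithin_le_iff.mpr ?_)
    filter_upwards [Ioo_mem_nhdsGT_of_mem (show (0:ℝ) ∈ Ico (0:ℝ) 1 by norm_num)] with x hx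
    exact ⟨hx.1.le, hx.2.le⟩
  have key : ∀ᶠ r in 𝓝[>] (0:ℝ),
      (∫ t in Ioc (0:ℝ) 1, h t) - (∫ t in Ioc (0:ℝ) r, h t) = ∫ t in Ioc r 1, h t := by
    filter_upwards [Ioo_mem_nhdsGT_of_mem (show (0:ℝ) ∈ Ico (0:ℝ) 1 by norm_num)] with r hr
    have hsplit : Ioc (0:ℝ) r ∪ Ioc r 1 = Ioc 0 1 := Ioc_union_Ioc_eq_Ioc hr.1.le hr.2.le
    have hdisj : Disjoint (Ioc (0:ℝ) r) (Ioc r 1) := Set.Ioc_disjoint_Ioc_of_le le_rfl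
    have h1 : IntegrableOn h (Ioc (0:ℝ) r) :=
      hh.mono (Ioc_subset_Ioc le_rfl hr.2.le) le_rfl
    have h2 : IntegrableOn h (Ioc r 1) := hh.mono (Ioc_subset_Ioc hr.1.le le_rfl) le_rfl
    rw [← hsplit, MeasureTheory.setIntegral_union hdisj measurableSet_Ioc h1 h2]
    ring
  have := (tendsto_const_nhds (x := ∫ t in Ioc (0:ℝ) 1, h t)
    (f := 𝓝[>] (0:ℝ))).sub hP
  rw [sub_zero] at this
  exact this.congr' key

/-- `Γ'(1)` as an integral. -/
lemma gamma_integral_eq : (∫ t in Ioi (0:ℝ), Real.log t * Real.exp (-t)) = -γ₀ := by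
  set I : ℝ := ∫ t in Ioi (0:ℝ), Real.log t * Real.exp (-t) with hI
  have h1 : HasDerivAt Complex.GammaIntegral
      (∫ t : ℝ in Ioi 0, (t:ℂ) ^ ((1:ℂ) - 1) * (Real.log t * Real.exp (-t))) 1 :=
    Complex.hasDerivAt_GammaIntegral (by simp)
  have h2 : (∫ t : ℝ in Ioi 0, (t:ℂ) ^ ((1:ℂ) - 1) * (Real.log t * Real.exp (-t))) = (I:ℂ) := by
    have hco : (I:ℂ) = ∫ t in Ioi (0:ℝ), ((Real.log t * Real.exp (-t) : ℝ) : ℂ) := by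
      rw [hI]; exact integral_ofReal.symm
    rw [hco]
    refine MeasureTheory.setIntegral_congr_fun measurableSet_Ioi fun t ht => ?_
    simp [Complex.ofReal_mul]
  rw [h2] at h1
  have h3 : Complex.Gamma =ᶠ[𝓝 (1:ℂ)] Complex.GammaIntegral := by
    have hopen : IsOpen {s : ℂ | 0 < s.re} := isOpen_lt continuous_const Complex.continuous_re
    filter_upwards [hopen.mem_nhds (by simp : (0:ℝ) < (1:ℂ).re)] with s hs
    exact Complex.Gamma_eq_integral hs
  have h4 : HasDerivAt Complex.Gamma (I:ℂ) 1 := h1.congr_of_eventuallyEq h3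
  have h5 : HasDerivAt (fun x : ℝ => (Complex.Gamma (x:ℂ)).re) (I:ℂ).re 1 :=
    h4.real_of_complex
  have h6 : HasDerivAt Real.Gamma I 1 := by
    have : (fun x : ℝ => (Complex.Gamma (x:ℂ)).re) = Real.Gamma := by
      funext x; rw [Complex.Gamma_ofReal]; rfl
    rwa [this, Complex.ofReal_re] at h5
  exact h6.unique Real.hasDerivAt_Gamma_one

lemma partA : (∫ t in Ioi (1:ℝ), Real.log t * Real.exp (-t))
    = ∫ t in Ioi (1:ℝ), Real.exp (-t) / t := by
  set f : ℝ → ℝ := fun t => -(Real.exp (-t) * Real.log t) with hf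
  set f' : ℝ → ℝ := fun t => Real.log t * Real.exp (-t) - Real.exp (-t) / t with hf'
  have hderiv : ∀ x ∈ Ici (1:ℝ), HasDerivAt f (f' x) x := by
    intro x hx
    have hx0 : (0:ℝ) < x := lt_of_lt_of_le zero_lt_one hx
    have h1 : HasDerivAt (fun t => Real.exp (-t) * Real.log t)
        (-Real.exp (-x) * Real.log x + Real.exp (-x) * x⁻¹) x :=
      (hasDerivAt_exp_neg x).mul (Real.hasDerivAt_log hx0.ne')
    have : HasDerivAt (fun t => -(Real.exp (-t) * Real.log t))
        (-(-Real.exp (-x) * Real.log x + Real.exp (-x) * x⁻¹)) x := h1.neg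
    convert this using 1
    simp only [hf']
    field_simp
    ring
  have hint : IntegrableOn f' (Ioi (1:ℝ)) := int_log_exp_Ioi1.sub int_exp_div_Ioi1
  have htop : Tendsto f atTop (𝓝 0) := by
    have hb : Tendsto (fun x : ℝ => x ^ 1 * Real.exp (-x)) atTop (𝓝 0) :=
      tendsto_pow_mul_exp_neg_atTop_nhds_zero 1
    refine squeeze_zero_norm' ?_ hb
    filter_upwards [eventually_ge_atTop (1:ℝ)] with t ht
    have hl : |Real.log t| ≤ t := by
      rw [abs_of_nonneg (Real.log_nonneg ht)]
      linarith [Real.log_le_sub_one_of_pos (by linarith : (0:ℝ) < t)]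
    have : ‖f t‖ = Real.exp (-t) * |Real.log t| := by
      rw [hf]; rw [norm_neg, Real.norm_eq_abs, abs_mul, abs_of_pos (Real.exp_pos _)]
    rw [this, pow_one]
    calc Real.exp (-t) * |Real.log t| ≤ Real.exp (-t) * t :=
          mul_le_mul_of_nonneg_left hl (Real.exp_pos _).le
      _ = t * Real.exp (-t) := mul_comm _ _
  have key := MeasureTheory.integral_Ioi_of_hasDerivAt_of_tendsto' hderiv hint htop
  have hf1 : f 1 = 0 := by simp [hf]
  rw [hf1, sub_zero] at key
  have := MeasureTheory.integral_sub int_log_exp_Ioi1 int_exp_div_Ioi1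
  rw [show (fun a => Real.log a * Real.exp (-a) - Real.exp (-a) / a) = f' from rfl] at this
  rw [key] at this
  linarith [this]

lemma partB : (∫ t in Ioc (0:ℝ) 1, Real.log t * Real.exp (-t))
    = -∫ t in Ioc (0:ℝ) 1, (1 - Real.exp (-t)) / t := by
  set g : ℝ → ℝ := fun t => (1 - Real.exp (-t)) / t + Real.log t * Real.exp (-t) with hg
  set F : ℝ → ℝ := fun t => Real.log t * (1 - Real.exp (-t)) with hF
  have hgint : IntegrableOn g (Ioc (0:ℝ) 1) := int_sub_div_Ioc.add int_log_exp_Ioc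
  have step1 : ∀ ε ∈ Ioo (0:ℝ) 1, (∫ t in Ioc ε 1, g t) = -F ε := by
    intro ε hε
    have hle : ε ≤ 1 := hε.2.le
    have hderiv : ∀ t ∈ uIcc ε 1, HasDerivAt F (g t) t := by
      intro t ht
      rw [uIcc_of_le hle] at ht
      have ht0 : (0:ℝ) < t := lt_of_lt_of_le hε.1 ht.1
      have h1 : HasDerivAt F
          (t⁻¹ * (1 - Real.exp (-t)) + Real.log t * Real.exp (-t)) t :=
        (Real.hasDerivAt_log ht0.ne').mul (hasDerivAt_one_sub_exp_neg t)
      convert h1 using 1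
      rw [hg]
      field_simp
    have hcont : IntervalIntegrable g volume ε 1 := by
      refine ContinuousOn.intervalIntegrable ?_
      rw [uIcc_of_le hle]
      have hne : ∀ t ∈ Icc ε 1, t ≠ 0 := fun t ht => (lt_of_lt_of_le hε.1 ht.1).ne'
      refine ContinuousOn.add (ContinuousOn.div (by fun_prop) continuousOn_id hne) ?_
      exact ContinuousOn.mul (fun t ht => (Real.continuousAt_log (hne t ht)).continuousWithinAt)
        (by fun_prop)
    have := intervalIntegral.integral_eq_sub_of_hasDerivAt hderiv hcont
    rw [intervalIntegral.integral_of_le hle] at this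
    rw [this, hF]
    simp
  have hLHS : Tendsto (fun ε => ∫ t in Ioc ε 1, g t) (𝓝[>] (0:ℝ))
      (𝓝 (∫ t in Ioc (0:ℝ) 1, g t)) := tendsto_integral_Ioc hgint
  have hRHS : Tendsto (fun ε => -F ε) (𝓝[>] (0:ℝ)) (𝓝 0) := by
    have hsq : Tendsto (fun ε : ℝ => 2 * Real.sqrt ε) (𝓝[>] (0:ℝ)) (𝓝 0) := by
      have : Tendsto (fun ε : ℝ => 2 * Real.sqrt ε) (𝓝 (0:ℝ)) (𝓝 (2 * Real.sqrt 0)) :=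
        (continuous_const.mul Real.continuous_sqrt).tendsto 0
      simpa using this.mono_left nhdsWithin_le_nhds
    refine squeeze_zero_norm' ?_ hsq
    filter_upwards [Ioo_mem_nhdsGT_of_mem (show (0:ℝ) ∈ Ico (0:ℝ) 1 by norm_num)] with ε hε
    have hε0 : (0:ℝ) < ε := hε.1
    have hlog : Real.log ε ≤ 0 := Real.log_nonpos hε0.le hε.2.le
    have h2 : 0 ≤ 1 - Real.exp (-ε) := by
      have : Real.exp (-ε) ≤ 1 := Real.exp_le_one_iff.mpr (by linarith)
      linarith
    have h1 : 1 - Real.exp (-ε) ≤ ε := by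
      have := Real.add_one_le_exp (-ε)
      nlinarith [Real.exp_pos (-ε)]
    have hb : -Real.log ε ≤ 2 * ε ^ (-(1/2) : ℝ) := neg_log_le ε hε0
    have hnorm : ‖-F ε‖ = -Real.log ε * (1 - Real.exp (-ε)) := by
      rw [norm_neg, hF, Real.norm_eq_abs, abs_mul, abs_of_nonpos hlog, abs_of_nonneg h2]
    rw [hnorm]
    calc -Real.log ε * (1 - Real.exp (-ε)) ≤ (2 * ε ^ (-(1/2) : ℝ)) * ε := by
          apply mul_le_mul hb h1 h2
          positivity
      _ = 2 * (ε ^ (-(1/2) : ℝ) * ε ^ (1:ℝ)) := by rw [Real.rpow_one]; ring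
      _ = 2 * ε ^ ((-(1/2) : ℝ) + 1) := by rw [← Real.rpow_add hε0]
      _ = 2 * ε ^ ((1:ℝ)/2) := by norm_num
      _ = 2 * Real.sqrt ε := by rw [Real.sqrt_eq_rpow]
  have heq : ∫ t in Ioc (0:ℝ) 1, g t = 0 := by
    refine tendsto_nhds_unique (hLHS.congr' ?_) hRHS
    filter_upwards [Ioo_mem_nhdsGT_of_mem (show (0:ℝ) ∈ Ico (0:ℝ) 1 by norm_num)] with ε hε
    exact (step1 ε hε)
  have hsplit := MeasureTheory.integral_add int_sub_div_Ioc int_log_exp_Ioc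
  rw [show (fun a => (1 - Real.exp (-a)) / a + Real.log a * Real.exp (-a)) = g from rfl] at hsplit
  rw [heq] at hsplit
  linarith [hsplit]

lemma key_identity : (-∫ t in Ioc (0:ℝ) 1, (1 - Real.exp (-t)) / t)
    + (∫ t in Ioi (1:ℝ), Real.exp (-t) / t) = -γ₀ := by
  have hsplit : Ioc (0:ℝ) 1 ∪ Ioi 1 = Ioi 0 := Ioc_union_Ioi_eq_Ioi zero_le_one
  have hdisj : Disjoint (Ioc (0:ℝ) 1) (Ioi 1) := Set.Ioc_disjoint_Ioi le_rfl
  have h := MeasureTheory.setIntegral_union hdisj measurableSet_Ioi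
    int_log_exp_Ioc int_log_exp_Ioi1 (f := fun t => Real.log t * Real.exp (-t))
  rw [hsplit, gamma_integral_eq, partA, partB] at h
  linarith [h]

lemma tendsto_E1_add_log :
    Tendsto (fun r => E1 r + Real.log r) (𝓝[>] (0:ℝ)) (𝓝 (-γ₀)) := by
  set h : ℝ → ℝ := fun t => (Real.exp (-t) - 1) / t with hh
  have hint : IntegrableOn h (Ioc (0:ℝ) 1) := by
    have heq : h = fun t => -((1 - Real.exp (-t)) / t) := by
      funext t; rw [hh]; ring
    rw [heq]
    exact int_sub_div_Ioc.neg
  have hIoc_eq : (∫ t in Ioc (0:ℝ) 1, h t) = -∫ t in Ioc (0:ℝ) 1, (1 - Real.exp (-t)) / t := by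
    rw [← MeasureTheory.integral_neg]
    refine MeasureTheory.setIntegral_congr_fun measurableSet_Ioc fun t _ => ?_
    rw [hh]; ring
  have key : ∀ r ∈ Ioo (0:ℝ) 1,
      E1 r + Real.log r = (∫ t in Ioc r 1, h t) + ∫ t in Ioi (1:ℝ), Real.exp (-t) / t := by
    intro r hr
    have hr0 := hr.1
    have hr1 := hr.2
    have hsplit : Ioc r 1 ∪ Ioi 1 = Ioi r := Ioc_union_Ioi_eq_Ioi hr1.le
    have hdisj : Disjoint (Ioc r 1) (Ioi (1:ℝ)) := Set.Ioc_disjoint_Ioi le_rfl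
    have hcont1 : IntegrableOn (fun t => Real.exp (-t) / t) (Ioc r 1) := by
      refine ContinuousOn.integrableOn_compact isCompact_Icc ?_ |>.mono Ioc_subset_Icc_self le_rfl
      exact ContinuousOn.div (by fun_prop) continuousOn_id
        (fun t ht => (lt_of_lt_of_le hr0 ht.1).ne')
    have hE1 : E1 r = (∫ t in Ioc r 1, Real.exp (-t) / t)
        + ∫ t in Ioi (1:ℝ), Real.exp (-t) / t := by
      rw [E1, ← hsplit, MeasureTheory.setIntegral_union hdisj measurableSet_Ioi hcont1
        int_exp_div_Ioi1]
    have hinv : IntegrableOn (fun t : ℝ => t⁻¹) (Ioc r 1) := by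
      refine ContinuousOn.integrableOn_compact isCompact_Icc ?_ |>.mono Ioc_subset_Icc_self le_rfl
      exact ContinuousOn.inv₀ continuousOn_id (fun t ht => (lt_of_lt_of_le hr0 ht.1).ne')
    have hh2 : IntegrableOn h (Ioc r 1) := hint.mono (Ioc_subset_Ioc hr0.le le_rfl) le_rfl
    have hdecomp : (∫ t in Ioc r 1, Real.exp (-t) / t)
        = (∫ t in Ioc r 1, h t) + ∫ t in Ioc r 1, (t:ℝ)⁻¹ := by
      rw [← MeasureTheory.integral_add hh2 hinv]
      refine MeasureTheory.setIntegral_congr_fun measurableSet_Ioc fun t ht => ?_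
      have ht0 : (0:ℝ) < t := hr0.trans ht.1
      rw [hh]
      field_simp
      ring
    have hinvval : (∫ t in Ioc r 1, (t:ℝ)⁻¹) = -Real.log r := by
      rw [← intervalIntegral.integral_of_le hr1.le,
        integral_inv (by
          rw [uIcc_of_le hr1.le]
          exact fun hmem => absurd hmem.1 (not_le.mpr hr0))]
      rw [one_div, Real.log_inv]
    rw [hE1, hdecomp, hinvval]
    ring
  have hT : Tendsto (fun r => (∫ t in Ioc r 1, h t) + ∫ t in Ioi (1:ℝ), Real.exp (-t) / t)
      (𝓝[>] (0:ℝ))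
      (𝓝 ((∫ t in Ioc (0:ℝ) 1, h t) + ∫ t in Ioi (1:ℝ), Real.exp (-t) / t)) :=
    (tendsto_integral_Ioc hint).add_const _
  have hval : (∫ t in Ioc (0:ℝ) 1, h t) + (∫ t in Ioi (1:ℝ), Real.exp (-t) / t) = -γ₀ := by
    rw [hIoc_eq]; exact key_identity
  rw [hval] at hT
  refine hT.congr' ?_
  filter_upwards [Ioo_mem_nhdsGT_of_mem (show (0:ℝ) ∈ Ico (0:ℝ) 1 by norm_num)] with r hr
  exact (key r hr).symm

end E1Aux

theorem limit_u11_at_zero (σ : ℝ) (hσ : 0 < σ) (γ : ℝ)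
    (hγ : Tendsto (fun n : ℕ => (∑ k ∈ Finset.range n, (1 : ℝ) / (k + 1)) - Real.log n)
      atTop (nhds γ)) :
    Tendsto (fun x : EuclideanSpace ℝ (Fin 2) =>
        -(1 / (4 * π)) * (E1 (‖x‖^2 / (2 * σ^2)) + 2 * Real.log ‖x‖))
      (nhdsWithin 0 {x : EuclideanSpace ℝ (Fin 2) | x ≠ 0})
      (nhds ((1 / (4 * π)) * (γ - Real.log (2 * σ^2)))) := by
  have hγeq : γ = Real.eulerMascheroniConstant := by
    have h2 := Real.tendsto_harmonic_sub_log
    have heq : (fun n : ℕ => (∑ k ∈ Finset.range n, (1 : ℝ) / (k + 1)) - Real.log n)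
        = fun n : ℕ => (harmonic n : ℝ) - Real.log n := by
      funext n
      congr 1
      rw [harmonic]
      push_cast
      simp [one_div]
    rw [heq] at hγ
    exact tendsto_nhds_unique hγ h2
  set r : EuclideanSpace ℝ (Fin 2) → ℝ := fun x => ‖x‖^2 / (2 * σ^2) with hr
  have hσ2 : (0:ℝ) < 2 * σ^2 := by positivity
  have hrt : Tendsto r (nhdsWithin 0 {x : EuclideanSpace ℝ (Fin 2) | x ≠ 0})
      (nhdsWithin 0 (Set.Ioi 0)) := by
    refine tendsto_nhdsWithin_of_tendsto_nhds_of_eventually_within _ ?_ ?_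
    · have hc : Continuous r := by
        rw [hr]; exact (continuous_norm.pow 2).div_const _
      have := hc.tendsto 0
      simp only [hr, norm_zero] at this
      norm_num at this
      exact this.mono_left nhdsWithin_le_nhds
    · filter_upwards [self_mem_nhdsWithin] with x hx
      have hx0 : (0:ℝ) < ‖x‖ := norm_pos_iff.mpr hx
      rw [hr]
      exact Set.mem_Ioi.mpr (by positivity)
  have hcomp : Tendsto (fun x => E1 (r x) + Real.log (r x))
      (nhdsWithin 0 {x : EuclideanSpace ℝ (Fin 2) | x ≠ 0})
      (nhds (-Real.eulerMascheroniConstant)) := E1Aux.tendsto_E1_add_log.comp hrt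
  have hT : Tendsto (fun x => -(1 / (4 * π)) * ((E1 (r x) + Real.log (r x))
        + Real.log (2 * σ^2)))
      (nhdsWithin 0 {x : EuclideanSpace ℝ (Fin 2) | x ≠ 0})
      (nhds (-(1 / (4 * π)) * ((-Real.eulerMascheroniConstant) + Real.log (2 * σ^2)))) :=
    ((hcomp.add_const _).const_mul _)
  have hfinal : -(1 / (4 * π)) * ((-Real.eulerMascheroniConstant) + Real.log (2 * σ^2))
      = (1 / (4 * π)) * (γ - Real.log (2 * σ^2)) := by
    rw [hγeq]; ring
  rw [hfinal] at hT
  refine hT.congr' ?_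
  filter_upwards [self_mem_nhdsWithin] with x hx
  have hx0 : (0:ℝ) < ‖x‖ := norm_pos_iff.mpr hx
  have hlog : Real.log (r x) = 2 * Real.log ‖x‖ - Real.log (2 * σ^2) := by
    rw [hr]
    rw [Real.log_div (by positivity) (by positivity), Real.log_pow]
    push_cast
    ring
  rw [hlog]
  ring
end
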